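/- Let K, A be real n×n matrices with K diagonal, K_{ii} ≥ 0, A_{ij} ≥ 0, and ∑_j A_{ij} = K_{ii} for each i (i.e., L = K - A is a Laplacian). Then for any τ_r ≥ 0, every root λ ∈ ℂ of det(λI + K - A·exp(-λτ_r)) = 0 with Re(λ) ≥ 0 satisfies λ = 0. -/

import Mathlib

/-- For a Laplacian `L = K - A` (`K` diagonal nonnegative, `A` nonnegative with row sums
equal to the diagonal of `K`), every root `λ` of `det(λI + K - A e^{-λτ_r}) = 0` with
`Re λ ≥ 0` equals `0`. -/
theorem consensus_char_roots (n : ℕ) (K A : Matrix (Fin n) (Fin n) ℝ)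
    (hK : ∀ i j, i ≠ j → K i j = 0) (hKnn : ∀ i, 0 ≤ K i i)
    (hA : ∀ i j, 0 ≤ A i j) (hrow : ∀ i, ∑ j, A i j = K i i)
    (τr : ℝ) (hτr : 0 ≤ τr) (lam : ℂ)
    (hroot : (lam • (1 : Matrix (Fin n) (Fin n) ℂ) + K.map Complex.ofReal
        - Complex.exp (-(lam * τr)) • A.map Complex.ofReal).det = 0)
    (hre : 0 ≤ lam.re) :
    lam = 0 := by
  set e : ℂ := Complex.exp (-(lam * τr)) with he
  obtain ⟨v, hv0, hv⟩ := (Matrix.exists_mulVec_eq_zero_iff).2 hroot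
  -- |e| ≤ 1
  have habs_e : ‖e‖ ≤ 1 := by
    rw [he, Complex.norm_exp]
    have : (-(lam * τr)).re = -(lam.re * τr) := by simp
    rw [this]
    exact Real.exp_le_one_iff.2 (neg_nonpos.2 (mul_nonneg hre hτr))
  -- pick index maximizing |v q|
  have hne : (Finset.univ : Finset (Fin n)).Nonempty := by
    by_contra h
    apply hv0
    ext j
    exact absurd (Finset.mem_univ j) (fun hj => h ⟨j, hj⟩)
  obtain ⟨q, -, hq⟩ := Finset.exists_max_image Finset.univ (fun i => ‖v i‖) hne
  have hvq : 0 < ‖v q‖ := by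
    rcases Function.ne_iff.1 hv0 with ⟨j, hj⟩
    exact lt_of_lt_of_le (by simpa using hj) (hq j (Finset.mem_univ j))
  -- the q-th row equation
  have hrowq := congrFun hv q
  have heq : (lam + (K q q : ℂ)) * v q = e * ∑ j, (A q j : ℂ) * v j := by
    have : ∑ j, ((lam • (1 : Matrix (Fin n) (Fin n) ℂ) + K.map Complex.ofReal
        - e • A.map Complex.ofReal) q j) * v j = 0 := by
      simpa [Matrix.mulVec, dotProduct] using hrowq
    have hKsum : ∑ j, ((K.map Complex.ofReal) q j) * v j = (K q q : ℂ) * v q := by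
      rw [Finset.sum_eq_single q]
      · simp [Matrix.map]
      · intro j _ hj
        simp [Matrix.map, hK q j (Ne.symm hj)]
      · simp
    have h1sum : ∑ j, ((lam • (1 : Matrix (Fin n) (Fin n) ℂ)) q j) * v j = lam * v q := by
      rw [Finset.sum_eq_single q]
      · simp
      · intro j _ hj
        simp [Matrix.one_apply_ne' hj]
      · simp
    calc (lam + (K q q : ℂ)) * v q
        = ∑ j, ((lam • (1 : Matrix (Fin n) (Fin n) ℂ) + K.map Complex.ofReal) q j) * v j := by
          simp only [Matrix.add_apply, add_mul, Finset.sum_add_distrib, h1sum, hKsum]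
      _ = e * ∑ j, (A q j : ℂ) * v j := by
          have := this
          simp only [Matrix.sub_apply, sub_mul, Finset.sum_sub_distrib, sub_eq_zero] at this
          rw [this, Finset.mul_sum]
          congr 1; ext j
          simp [Matrix.map, smul_eq_mul]; ring
  -- bound
  have hbound : ‖lam + (K q q : ℂ)‖ * ‖v q‖
      ≤ K q q * ‖v q‖ := by
    calc ‖lam + (K q q : ℂ)‖ * ‖v q‖
        = ‖e * ∑ j, (A q j : ℂ) * v j‖ := by rw [← norm_mul, heq]
      _ = ‖e‖ * ‖∑ j, (A q j : ℂ) * v j‖ := by rw [norm_mul]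
      _ ≤ 1 * ‖∑ j, (A q j : ℂ) * v j‖ := by
          exact mul_le_mul_of_nonneg_right habs_e (by positivity)
      _ ≤ ∑ j, A q j * ‖v j‖ := by
          rw [one_mul]
          refine (norm_sum_le _ _).trans ?_
          refine Finset.sum_le_sum fun j _ => ?_
          rw [norm_mul, Complex.norm_of_nonneg (hA q j)]
      _ ≤ ∑ j, A q j * ‖v q‖ := by
          refine Finset.sum_le_sum fun j _ => ?_
          exact mul_le_mul_of_nonneg_left (hq j (Finset.mem_univ j)) (hA q j)
      _ = K q q * ‖v q‖ := by rw [← Finset.sum_mul, hrow]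
  have hfin : ‖lam + (K q q : ℂ)‖ ≤ K q q :=
    le_of_mul_le_mul_right hbound hvq
  -- conclude λ = 0
  have hsq : (lam.re + K q q)^2 + lam.im^2 ≤ (K q q)^2 := by
    have h1 : ‖lam + (K q q : ℂ)‖ ^ 2 ≤ (K q q)^2 := by
      have h0 : (0:ℝ) ≤ K q q := hKnn q
      nlinarith [norm_nonneg (lam + (K q q : ℂ))]
    rw [Complex.sq_norm, Complex.normSq_apply] at h1
    simpa [Complex.add_re, Complex.add_im, sq] using h1
  have hre0 : lam.re = 0 := by nlinarith [sq_nonneg lam.im, sq_nonneg lam.re, hKnn q]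
  have him0 : lam.im = 0 := by nlinarith [sq_nonneg lam.re, hKnn q]
  exact Complex.ext hre0 him0
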